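/- Let r > 0. There exists a constant c > 0, depending only on r, such that for every continuously differentiable u : E → ℝ³ on E = {x ∈ ℝ³ : |x| > r, x₃ < 0} with ∫_E |u|²/(1+|x|²) dx < ∞ and ∫_E |∇u|² dx < ∞, one has the Hardy-type inequality ∫_E |u(x)|²/(1+|x|²) dx ≤ c ∫_E |∇u(x)|² dx. -/

import Mathlib

open MeasureTheory Metric Set

noncomputable section

abbrev E3 := EuclideanSpace ℝ (Fin 3)
abbrev E2 := EuclideanSpace ℝ (Fin 2)

/-- The open lower half-space `{x : x₃ < 0}`. -/
def lowerHalf : Set E3 := {x | x 2 < 0}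

/-- The lower half-ball `B⁻_r(0) = {|x| < r, x₃ < 0}`. -/
def negBall (r : ℝ) : Set E3 := {x | ‖x‖ < r ∧ x 2 < 0}

/-- Jacobian matrix of a vector field: `(jac u x) i j = ∂uᵢ/∂xⱼ (x)`. -/
def jac (u : E3 → E3) (x : E3) : Matrix (Fin 3) (Fin 3) ℝ :=
  fun i j => fderiv ℝ u x (EuclideanSpace.single j 1) i

/-- Symmetric part of the Jacobian (strain tensor) `∇̂u`. -/
def strain (u : E3 → E3) (x : E3) : Matrix (Fin 3) (Fin 3) ℝ :=
  fun i j => (jac u x i j + jac u x j i) / 2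

/-- Squared Frobenius norm of a 3×3 matrix. -/
def frob2 (M : Matrix (Fin 3) (Fin 3) ℝ) : ℝ := ∑ i, ∑ j, (M i j)^2

/-- Divergence of a vector field. -/
def divg (u : E3 → E3) (x : E3) : ℝ := ∑ i, jac u x i i

/-- Projection on the first two coordinates. -/
def proj12 (x : E3) : E2 :=
  (x 0) • EuclideanSpace.single 0 1 + (x 1) • EuclideanSpace.single 1 1

/-- Embedding of the plane `{x₃ = 0}` into `ℝ³`: `x' ↦ (x'₁, x'₂, 0)`. -/
def emb2 (x' : E2) : E3 :=
  (x' 0) • EuclideanSpace.single 0 1 + (x' 1) • EuclideanSpace.single 1 1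

/-- Partial derivative of a scalar field in the k-th coordinate direction. -/
def pd (f : E3 → ℝ) (k : Fin 3) (x : E3) : ℝ := fderiv ℝ f x (EuclideanSpace.single k 1)


section HardyAux
open Filter Topology

lemma hardy_one_dim {r : ℝ} (hr : 0 < r) {f f' : ℝ → ℝ}
    (hd : ∀ s ∈ Ioi r, HasDerivAt f (f' s) s)
    (hc : ContinuousOn f' (Ioi r))
    (hf : IntegrableOn (fun s => (f s)^2) (Ioi r))
    (hf' : IntegrableOn (fun s => (f' s)^2 * s^2) (Ioi r)) :
    (∫ s in Ioi r, (f s)^2) ≤ 4 * ∫ s in Ioi r, (f' s)^2 * s^2 := by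
  set J := ∫ s in Ioi r, (f' s)^2 * s^2 with hJdef
  have hJ0 : 0 ≤ J := setIntegral_nonneg measurableSet_Ioi (fun s _ => by positivity)
  have hcf : ContinuousOn f (Ioi r) := fun s hs => (hd s hs).continuousAt.continuousWithinAt
  -- tail integral
  set T : ℝ → ℝ := fun M => ∫ s in Ioi M, (f s)^2 with hTdef
  have hT0 : ∀ M, r ≤ M → 0 ≤ T M := fun M _ =>
    setIntegral_nonneg measurableSet_Ioi (fun s _ => by positivity)
  -- Step 1 : IBP bound
  have step1 : ∀ a R : ℝ, r < a → a ≤ R →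
      (∫ s in Ioc a R, (f s)^2) ≤ 2 * (R * (f R)^2) + 4 * J := by
    intro a R ha haR
    have hsub : Icc a R ⊆ Ioi r := fun x hx => lt_of_lt_of_le ha hx.1
    have hsub' : Ioc a R ⊆ Ioi r := fun x hx => lt_of_lt_of_le ha hx.1.le
    have huIcc : uIcc a R = Icc a R := uIcc_of_le haR
    have hcf2 : ContinuousOn (fun s => (f s)^2 + 2*s*(f s)*(f' s)) (Icc a R) := by
      apply ContinuousOn.add
      · exact ((hcf.mono hsub).pow 2)
      · exact (((continuousOn_const.mul continuousOn_id).mul (hcf.mono hsub)).mul (hc.mono hsub))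
    have hIBP : ∫ s in a..R, ((f s)^2 + 2*s*(f s)*(f' s)) = R * (f R)^2 - a * (f a)^2 := by
      apply intervalIntegral.integral_eq_sub_of_hasDerivAt
      · intro x hx
        rw [huIcc] at hx
        have hx' : x ∈ Ioi r := hsub hx
        have h1 : HasDerivAt (fun s : ℝ => s) 1 x := hasDerivAt_id x
        have h2 : HasDerivAt (fun s => (f s)^2) (2 * f x * f' x) x := by
          simpa using ((hd x hx').fun_pow 2)
        have := h1.fun_mul h2
        convert this using 1
        · rfl
        ring
      · rw [huIcc] at *
        exact (hcf2.intervalIntegrable_of_Icc haR)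
    have hi1 : IntervalIntegrable (fun s => (f s)^2) volume a R :=
      ((hcf.mono hsub).pow 2).intervalIntegrable_of_Icc haR
    have hi2 : IntervalIntegrable (fun s => 2*s*(f s)*(f' s)) volume a R :=
      ((((continuousOn_const.mul continuousOn_id).mul (hcf.mono hsub)).mul
        (hc.mono hsub)).intervalIntegrable_of_Icc haR)
    have hi3 : IntervalIntegrable (fun s => (1/2) * (f s)^2 + 2 * ((f' s)^2 * s^2)) volume a R := by
      apply IntervalIntegrable.add
      · exact hi1.const_mul _
      · exact ((((hc.mono hsub).pow 2).mul ((continuousOn_id.mono hsub).pow 2)).intervalIntegrable_of_Icc haR).const_mul _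
    have hsplit : ∫ s in a..R, ((f s)^2 + 2*s*(f s)*(f' s))
        = (∫ s in a..R, (f s)^2) + ∫ s in a..R, 2*s*(f s)*(f' s) :=
      intervalIntegral.integral_add hi1 hi2
    -- pointwise AM-GM : -(2*s*f*f') ≤ (1/2) f^2 + 2 f'^2 s^2
    have hptw : ∀ x ∈ Icc a R, -(2*x*(f x)*(f' x)) ≤ (1/2) * (f x)^2 + 2 * ((f' x)^2 * x^2) := by
      intro x hx
      nlinarith [sq_nonneg (f x + 2 * x * f' x)]
    have hmono : ∫ s in a..R, -(2*s*(f s)*(f' s)) ≤ ∫ s in a..R, ((1/2) * (f s)^2 + 2 * ((f' s)^2 * s^2)) :=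
      intervalIntegral.integral_mono_on haR hi2.neg hi3 hptw
    rw [intervalIntegral.integral_neg] at hmono
    -- interval integrals as set integrals over Ioc
    have e1 : ∫ s in a..R, (f s)^2 = ∫ s in Ioc a R, (f s)^2 :=
      intervalIntegral.integral_of_le haR
    have e2 : ∫ s in a..R, ((1/2) * (f s)^2 + 2 * ((f' s)^2 * s^2))
        = (1/2) * (∫ s in Ioc a R, (f s)^2) + 2 * ∫ s in Ioc a R, ((f' s)^2 * s^2) := by
      rw [intervalIntegral.integral_of_le haR, integral_add, integral_const_mul, integral_const_mul]
      · exact (hf.mono_set hsub').const_mul _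
      · exact (hf'.mono_set hsub').const_mul _
    have e3 : (∫ s in Ioc a R, ((f' s)^2 * s^2)) ≤ J := by
      apply setIntegral_mono_set hf'
      · exact Eventually.of_forall (fun s => by positivity)
      · exact HasSubset.Subset.eventuallyLE hsub'
    have e4 : 0 ≤ a * (f a)^2 := mul_nonneg (by linarith) (sq_nonneg _)
    have h5 : (∫ s in Ioc a R, (f s)^2) + (∫ s in a..R, 2*s*(f s)*(f' s)) = R * (f R)^2 - a * (f a)^2 := by
      rw [← e1, ← hsplit, hIBP]
    -- combine
    nlinarith [hmono, h5, e3]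
  -- Step 2: good radii
  have step2 : ∀ M : ℝ, r < M → 1 ≤ M → ∃ R ∈ Icc M (2*M), R * (f R)^2 ≤ 4 * T M + 1/M := by
    intro M hrM h1M
    by_contra h
    push_neg at h
    have hM0 : 0 < M := lt_of_le_of_lt' h1M one_pos |>.trans_le le_rfl
    have hlow : ∀ x ∈ Ioc M (2*M), (4 * T M + 1/M) / (2*M) ≤ (f x)^2 := by
      intro x hx
      have hx1 : x ∈ Icc M (2*M) := ⟨hx.1.le, hx.2⟩
      have := h x hx1
      have hxpos : 0 < x := hM0.trans hx.1
      rw [div_le_iff₀ (by linarith)]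
      calc (4 * T M + 1/M) ≤ x * (f x)^2 := this.le
        _ ≤ (f x)^2 * (2*M) := by nlinarith [sq_nonneg (f x), hx.2]
    have hTM0 : 0 ≤ T M := hT0 M hrM.le
    have hint : IntegrableOn (fun x => (f x)^2) (Ioc M (2*M)) :=
      hf.mono_set (fun x hx => lt_of_lt_of_le hrM hx.1.le |>.trans_le le_rfl)
    have hmeas' : (volume (Ioc M (2*M))).toReal = M := by
      rw [Real.volume_Ioc]; rw [ENNReal.toReal_ofReal (by linarith)]; ring
    have hge := setIntegral_ge_of_const_le_real measurableSet_Ioc (by simp [Real.volume_Ioc]) hlow hint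
    rw [measureReal_def, hmeas'] at hge
    have hle : (∫ x in Ioc M (2*M), (f x)^2) ≤ T M := by
      show _ ≤ ∫ s in Ioi M, (f s)^2
      apply setIntegral_mono_set (hf.mono_set (fun x hx => hrM.trans hx))
      · exact Eventually.of_forall (fun s => by positivity)
      · exact HasSubset.Subset.eventuallyLE (fun x hx => hx.1)
    have heq : (4 * T M + 1/M) / (2*M) * M = 2 * T M + 1/(2*M) := by
      field_simp; ring
    rw [heq] at hge
    have h1M' : 0 < 1/(2*M) := by positivity
    linarith
  -- Step 3: pass to the limit
  set I := ∫ s in Ioi r, (f s)^2 with hIdef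
  -- integral over Ioc r n tends to I
  have hmono_t : Monotone (fun n : ℕ => Ioc r (n:ℝ)) := fun n m hnm =>
    Ioc_subset_Ioc le_rfl (by exact_mod_cast hnm)
  have hunion_t : (⋃ n : ℕ, Ioc r (n:ℝ)) = Ioi r := by
    apply Subset.antisymm (iUnion_subset fun n x hx => hx.1)
    intro x hx
    obtain ⟨n, hn⟩ := exists_nat_ge x
    exact mem_iUnion.2 ⟨n, hx, hn⟩
  have htend_t : Tendsto (fun n : ℕ => ∫ s in Ioc r (n:ℝ), (f s)^2) atTop (𝓝 I) := by
    have := tendsto_setIntegral_of_monotone (fun n : ℕ => measurableSet_Ioc) hmono_t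
      (by rw [hunion_t]; exact hf)
    rwa [hunion_t] at this
  have hTn : ∀ n : ℕ, r ≤ n → T n = I - ∫ s in Ioc r (n:ℝ), (f s)^2 := by
    intro n hn
    have hdisj : Disjoint (Ioc r (n:ℝ)) (Ioi (n:ℝ)) := by
      rw [Set.disjoint_left]; exact fun x hx hx' => absurd hx.2 (not_le.2 hx')
    have hsplit : I = (∫ s in Ioc r (n:ℝ), (f s)^2) + ∫ s in Ioi (n:ℝ), (f s)^2 := by
      rw [hIdef, ← Ioc_union_Ioi_eq_Ioi hn]
      exact setIntegral_union hdisj measurableSet_Ioi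
        (hf.mono_set Ioc_subset_Ioi_self) (hf.mono_set (fun x hx => hn.trans_lt hx))
    simp only [hTdef]
    linarith [hsplit]
  have htendT : Tendsto (fun n : ℕ => T n) atTop (𝓝 0) := by
    have h1 : Tendsto (fun n : ℕ => I - ∫ s in Ioc r (n:ℝ), (f s)^2) atTop (𝓝 (I - I)) :=
      tendsto_const_nhds.sub htend_t
    rw [sub_self] at h1
    apply h1.congr'
    filter_upwards [eventually_ge_atTop (⌈r⌉₊)] with n hn
    exact (hTn n ((Nat.le_ceil r).trans (by exact_mod_cast hn))).symm
  -- the increasing approximating sets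
  have hmono_s : Monotone (fun n : ℕ => Ioc (r + 1/(n+1)) (n:ℝ)) := by
    intro n m hnm
    apply Ioc_subset_Ioc _ (by exact_mod_cast hnm)
    have : (1:ℝ)/(m+1) ≤ 1/(n+1) := by
      apply one_div_le_one_div_of_le (by positivity)
      have : (n:ℝ) ≤ m := by exact_mod_cast hnm
      linarith
    linarith
  have hunion_s : (⋃ n : ℕ, Ioc (r + 1/(n+1)) (n:ℝ)) = Ioi r := by
    apply Subset.antisymm
    · exact iUnion_subset fun n x hx => lt_of_lt_of_le (lt_add_of_pos_right r (by positivity)) hx.1.le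
    · intro x hx
      obtain ⟨n₁, hn₁⟩ := exists_nat_one_div_lt (sub_pos.2 (show r < x from hx))
      obtain ⟨n₂, hn₂⟩ := exists_nat_ge x
      refine mem_iUnion.2 ⟨max n₁ n₂, ⟨?_, ?_⟩⟩
      · have h1 : (1:ℝ)/(max n₁ n₂+1) ≤ 1/(n₁+1) := by
          apply one_div_le_one_div_of_le (by positivity)
          have : (n₁:ℝ) ≤ max n₁ n₂ := by exact_mod_cast le_max_left n₁ n₂
          linarith
        have := h1.trans_lt hn₁
        linarith
      · have : (n₂:ℝ) ≤ max n₁ n₂ := by exact_mod_cast le_max_right n₁ n₂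
        linarith
  have htendI : Tendsto (fun n : ℕ => ∫ s in Ioc (r + 1/(n+1)) (n:ℝ), (f s)^2) atTop (𝓝 I) := by
    have := tendsto_setIntegral_of_monotone (fun n : ℕ => measurableSet_Ioc) hmono_s
      (by rw [hunion_s]; exact hf)
    rwa [hunion_s] at this
  have htendRHS : Tendsto (fun n : ℕ => 8 * T n + 2/(n:ℝ) + 4*J) atTop (𝓝 (4*J)) := by
    have h1 : Tendsto (fun n : ℕ => (8:ℝ) * T n) atTop (𝓝 0) := by
      simpa using htendT.const_mul 8
    have h2 : Tendsto (fun n : ℕ => (2:ℝ)/(n:ℝ)) atTop (𝓝 0) :=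
      tendsto_const_div_atTop_nhds_zero_nat 2
    have := (h1.add h2).add (tendsto_const_nhds (x := 4*J))
    simpa using this
  refine le_of_tendsto_of_tendsto htendI htendRHS ?_
  filter_upwards [eventually_ge_atTop ⌈r+2⌉₊] with n hnn
  have hn : r + 2 ≤ (n:ℝ) := (Nat.le_ceil _).trans (by exact_mod_cast hnn)
  · have hrn : r < (n:ℝ) := by linarith
    have h1n : 1 ≤ (n:ℝ) := by linarith
    obtain ⟨R, hRmem, hRbound⟩ := step2 n hrn h1n
    have ha : r < r + 1/(n+1:ℝ) := by
      have : (0:ℝ) < 1/(n+1:ℝ) := by positivity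
      linarith
    have haR : r + 1/(n+1:ℝ) ≤ R := by
      have h1 : (1:ℝ)/(n+1) ≤ 1 := by
        rw [div_le_one (by positivity)]; linarith
      linarith [hRmem.1]
    have hsubs : Ioc (r + 1/(n+1:ℝ)) (n:ℝ) ⊆ Ioc (r + 1/(n+1:ℝ)) R := Ioc_subset_Ioc le_rfl hRmem.1
    have hmono2 : (∫ s in Ioc (r + 1/(n+1:ℝ)) (n:ℝ), (f s)^2) ≤ ∫ s in Ioc (r + 1/(n+1:ℝ)) R, (f s)^2 := by
      apply setIntegral_mono_set (hf.mono_set (fun x hx => lt_of_lt_of_le ha hx.1.le))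
      · exact Eventually.of_forall (fun s => by positivity)
      · exact HasSubset.Subset.eventuallyLE hsubs
    calc (∫ s in Ioc (r + 1/(n+1:ℝ)) (n:ℝ), (f s)^2) ≤ ∫ s in Ioc (r + 1/(n+1:ℝ)) R, (f s)^2 := hmono2
      _ ≤ 2 * (R * (f R)^2) + 4 * J := step1 _ R ha haR
      _ ≤ 2 * (4 * T n + 1/(n:ℝ)) + 4 * J := by linarith [hRbound]
      _ = 8 * T n + 2/(n:ℝ) + 4*J := by ring

lemma norm_sq_eq (y : E3) : ‖y‖^2 = ∑ i, (y i)^2 := by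
  rw [EuclideanSpace.norm_eq, Real.sq_sqrt (Finset.sum_nonneg fun i _ => by positivity)]
  simp [sq_abs]

lemma comp_sq_le (y : E3) (i : Fin 3) : (y i)^2 ≤ ‖y‖^2 := by
  rw [norm_sq_eq]
  exact Finset.single_le_sum (f := fun j => (y j)^2) (fun j _ => by positivity) (Finset.mem_univ i)

lemma decomp (ω : E3) : ω = ∑ j : Fin 3, (ω j) • EuclideanSpace.single j 1 := by
  ext k
  rw [show (∑ j : Fin 3, (ω j) • EuclideanSpace.single j (1:ℝ)) k
      = ∑ j : Fin 3, ω j * (EuclideanSpace.single j (1:ℝ)) k from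
    Finset.sum_apply k Finset.univ fun j => (ω j) • EuclideanSpace.single j (1:ℝ)]
  simp [EuclideanSpace.single_apply]

lemma fderiv_apply_comp (u : E3 → E3) (x : E3) (ω : E3) (i : Fin 3) :
    fderiv ℝ u x ω i = ∑ j, ω j * jac u x i j := by
  conv_lhs => rw [decomp ω]
  rw [map_sum]
  simp only [_root_.map_smul]
  rw [show ((∑ j : Fin 3, ω j • (fderiv ℝ u x) (EuclideanSpace.single j 1)) i)
      = ∑ j : Fin 3, ω j • ((fderiv ℝ u x) (EuclideanSpace.single j 1) i) from
    Finset.sum_apply i Finset.univ fun j => ω j • (fderiv ℝ u x) (EuclideanSpace.single j 1)]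
  rfl

lemma deriv_comp_sq_le (u : E3 → E3) (x : E3) (ω : E3) (hω : ‖ω‖ = 1) (i : Fin 3) :
    (fderiv ℝ u x ω i)^2 ≤ ∑ j, (jac u x i j)^2 := by
  rw [fderiv_apply_comp]
  have hcs := Finset.sum_mul_sq_le_sq_mul_sq Finset.univ (fun j => ω j) (fun j => jac u x i j)
  have hω2 : (∑ j, (ω j)^2) = 1 := by
    rw [← norm_sq_eq, hω, one_pow]
  simp only [hω2, one_mul] at hcs
  exact hcs

lemma deriv_norm_sq_le (u : E3 → E3) (x : E3) (ω : E3) (hω : ‖ω‖ = 1) :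
    (∑ i, (fderiv ℝ u x ω i)^2) ≤ frob2 (jac u x) := by
  exact Finset.sum_le_sum fun i _ => deriv_comp_sq_le u x ω hω i

lemma integral_vIP (φ : ℝ → ℝ) :
    (∫ s : Ioi (0:ℝ), φ s.1 ∂(Measure.volumeIoiPow 2)) = ∫ s in Ioi (0:ℝ), s^2 * φ s := by
  rw [Measure.volumeIoiPow]
  simp only [ENNReal.ofReal]
  rw [integral_withDensity_eq_integral_smul ((measurable_subtype_coe.pow_const 2).real_toNNReal)
    (fun s : Ioi (0:ℝ) => φ s.1)]
  rw [integral_subtype_comap measurableSet_Ioi (fun a => Real.toNNReal (a^2) • φ a)]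
  apply setIntegral_congr_fun measurableSet_Ioi
  intro x _
  show (x^2).toNNReal • φ x = x^2 * φ x
  rw [NNReal.smul_def, Real.coe_toNNReal _ (by positivity), smul_eq_mul]

lemma integrable_vIP (φ : ℝ → ℝ) :
    Integrable (fun s : Ioi (0:ℝ) => φ s.1) (Measure.volumeIoiPow 2) ↔
      IntegrableOn (fun s => s^2 * φ s) (Ioi (0:ℝ)) := by
  rw [Measure.volumeIoiPow]
  simp only [ENNReal.ofReal]
  rw [integrable_withDensity_iff_integrable_smul
    ((measurable_subtype_coe.pow_const 2).real_toNNReal)]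
  have h2 := (MeasurableEmbedding.subtype_coe (measurableSet_Ioi (a := (0:ℝ)))).integrable_map_iff
    (μ := Measure.comap Subtype.val volume) (g := fun a => Real.toNNReal (a^2) • φ a)
  rw [map_comap_subtype_coe measurableSet_Ioi] at h2
  have h3 : Integrable (fun x : Ioi (0:ℝ) => (x.1^2).toNNReal • φ x.1)
      (Measure.comap Subtype.val volume) ↔
      Integrable (fun a : ℝ => (a^2).toNNReal • φ a) (volume.restrict (Ioi 0)) := h2.symm
  rw [h3]
  unfold IntegrableOn
  apply integrable_congr
  apply Eventually.of_forall
  intro x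
  show (x^2).toNNReal • φ x = x^2 * φ x
  rw [NNReal.smul_def, Real.coe_toNNReal _ (by positivity), smul_eq_mul]

lemma polar_prep (F : E3 → ℝ) (hF : Integrable F) :
    Integrable (fun p : sphere (0:E3) 1 × Ioi (0:ℝ) => F (p.2.1 • p.1.1))
      (((volume : Measure E3).toSphere).prod (Measure.volumeIoiPow 2)) ∧
    (∫ x, F x) = ∫ p : sphere (0:E3) 1 × Ioi (0:ℝ), F (p.2.1 • p.1.1)
      ∂(((volume : Measure E3).toSphere).prod (Measure.volumeIoiPow 2)) := by
  have hdim : Module.finrank ℝ E3 - 1 = 2 := by rw [finrank_euclideanSpace_fin]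
  have mp := (volume : Measure E3).measurePreserving_homeomorphUnitSphereProd
  rw [hdim] at mp
  set g : sphere (0:E3) 1 × Ioi (0:ℝ) → ℝ := fun p => F (p.2.1 • p.1.1) with hg
  have hcomp : (fun x : ({0}ᶜ : Set E3) => g (homeomorphUnitSphereProd E3 x)) =
      fun x : ({0}ᶜ : Set E3) => F x.1 := by
    funext x
    have hx : (x : E3) ≠ 0 := x.2
    simp only [g, homeomorphUnitSphereProd_apply_fst_coe, homeomorphUnitSphereProd_apply_snd_coe,
      smul_smul]
    rw [mul_inv_cancel₀ (norm_ne_zero_iff.2 hx), one_smul]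
  have hFsub : Integrable (fun x : ({0}ᶜ : Set E3) => F x.1)
      (Measure.comap Subtype.val (volume : Measure E3)) := by
    have h2 := (MeasurableEmbedding.subtype_coe
      (MeasurableSet.compl (measurableSet_singleton (0:E3)))).integrable_map_iff
      (μ := Measure.comap Subtype.val (volume : Measure E3)) (g := F)
    rw [map_comap_subtype_coe (MeasurableSet.compl (measurableSet_singleton (0:E3)))] at h2
    exact h2.1 hF.restrict
  constructor
  · refine (mp.integrable_comp_emb (Homeomorph.measurableEmbedding _)).1 ?_
    show Integrable (fun x => g (homeomorphUnitSphereProd E3 x)) _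
    rw [hcomp]; exact hFsub
  · calc ∫ x, F x = ∫ x in ({0}ᶜ : Set E3), F x := by
          rw [MeasureTheory.restrict_compl_singleton]
      _ = ∫ x : ({0}ᶜ : Set E3), F x.1 ∂(Measure.comap Subtype.val (volume : Measure E3)) :=
          (integral_subtype_comap (MeasurableSet.compl (measurableSet_singleton (0:E3))) F).symm
      _ = ∫ p, g p ∂(((volume : Measure E3).toSphere).prod (Measure.volumeIoiPow 2)) := by
          rw [← mp.integral_comp (Homeomorph.measurableEmbedding _) g, hcomp]

lemma polar_repr (F : E3 → ℝ) (hF : Integrable F) :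
    ((∫ x, F x) = ∫ ω : sphere (0:E3) 1, (∫ s in Ioi (0:ℝ), s^2 * F (s • (ω:E3)))
        ∂((volume : Measure E3).toSphere)) ∧
    (∀ᵐ (ω : sphere (0:E3) 1) ∂((volume : Measure E3).toSphere),
      IntegrableOn (fun s => s^2 * F (s • (ω:E3))) (Ioi (0:ℝ))) ∧
    (Integrable (fun ω : sphere (0:E3) 1 => ∫ s in Ioi (0:ℝ), s^2 * F (s • (ω:E3)))
        ((volume : Measure E3).toSphere)) := by
  obtain ⟨hint, heq⟩ := polar_prep F hF
  refine ⟨?_, ?_, ?_⟩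
  · rw [heq, integral_prod _ hint]
    apply integral_congr_ae
    apply Eventually.of_forall
    intro ω
    exact integral_vIP (fun s => F (s • (ω:E3)))
  · filter_upwards [hint.prod_right_ae] with ω hω
    exact (integrable_vIP (fun s => F (s • (ω:E3)))).1 hω
  · have := hint.integral_prod_left
    apply this.congr
    apply Eventually.of_forall
    intro ω
    exact integral_vIP (fun s => F (s • (ω:E3)))

lemma weight_bound {r s t : ℝ} (hr : 0 < r) (hs : r < s) (ht : 0 ≤ t) :
    t ≤ (1+r^2)/r^2 * (s^2 * (t/(1+s^2))) := by
  have h1 : (1+r^2)/r^2 * (s^2 * (t/(1+s^2))) = t*((1+r^2)*s^2)/(r^2*(1+s^2)) := by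
    field_simp
  rw [h1, le_div_iff₀ (by positivity)]
  have hr2 : r^2 ≤ s^2 := by nlinarith
  nlinarith [mul_le_mul_of_nonneg_left hr2 ht]

lemma key_ray {r : ℝ} (hr : 0 < r) (u : E3 → E3)
    (hu : ContDiffOn ℝ 1 u {x : E3 | r < ‖x‖ ∧ x 2 < 0})
    (ω : E3) (hω : ‖ω‖ = 1) (hω2 : ω 2 < 0)
    (h1 : IntegrableOn (fun s : ℝ => s^2 *
      ({x : E3 | r < ‖x‖ ∧ x 2 < 0}.indicator (fun x => ‖u x‖^2/(1+‖x‖^2)) (s • ω))) (Ioi 0))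
    (h2 : IntegrableOn (fun s : ℝ => s^2 *
      ({x : E3 | r < ‖x‖ ∧ x 2 < 0}.indicator (fun x => frob2 (jac u x)) (s • ω))) (Ioi 0)) :
    (∫ s in Ioi (0:ℝ), s^2 *
        ({x : E3 | r < ‖x‖ ∧ x 2 < 0}.indicator (fun x => ‖u x‖^2/(1+‖x‖^2)) (s • ω)))
      ≤ 4 * ∫ s in Ioi (0:ℝ), s^2 *
        ({x : E3 | r < ‖x‖ ∧ x 2 < 0}.indicator (fun x => frob2 (jac u x)) (s • ω)) := by
  set S : Set E3 := {x : E3 | r < ‖x‖ ∧ x 2 < 0} with hSdef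
  have hS : IsOpen S := by
    apply IsOpen.inter
    · exact isOpen_lt continuous_const continuous_norm
    · exact isOpen_lt (EuclideanSpace.proj (𝕜 := ℝ) (2 : Fin 3)).continuous continuous_const
  have hnorm : ∀ s : ℝ, 0 < s → ‖s • ω‖ = s := by
    intro s hs
    rw [norm_smul, hω, mul_one, Real.norm_eq_abs, abs_of_pos hs]
  have hsm2 : ∀ s : ℝ, (s • ω) 2 = s * ω 2 := fun s => rfl
  have hmem : ∀ s : ℝ, 0 < s → (s • ω ∈ S ↔ r < s) := by
    intro s hs
    constructor
    · intro hx; rw [← hnorm s hs]; exact hx.1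
    · intro hrs
      refine ⟨by rw [hnorm s hs]; exact hrs, ?_⟩
      rw [hsm2]
      exact mul_neg_of_pos_of_neg hs hω2
  -- rewriting the two integrands on `Ioi 0`
  have eq1 : ∀ s ∈ Ioi (0:ℝ), s^2 * (S.indicator (fun x => ‖u x‖^2/(1+‖x‖^2)) (s • ω))
      = (Ioi r).indicator (fun s : ℝ => s^2 * (‖u (s • ω)‖^2/(1+s^2))) s := by
    intro s hs
    by_cases hrs : r < s
    · rw [indicator_of_mem ((hmem s hs).2 hrs), indicator_of_mem (show s ∈ Ioi r from hrs), hnorm s hs]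
    · rw [indicator_of_notMem (fun hx => hrs ((hmem s hs).1 hx)),
        indicator_of_notMem (show s ∉ Ioi r from hrs), mul_zero]
  have eq2 : ∀ s ∈ Ioi (0:ℝ), s^2 * (S.indicator (fun x => frob2 (jac u x)) (s • ω))
      = (Ioi r).indicator (fun s : ℝ => s^2 * frob2 (jac u (s • ω))) s := by
    intro s hs
    by_cases hrs : r < s
    · rw [indicator_of_mem ((hmem s hs).2 hrs), indicator_of_mem (show s ∈ Ioi r from hrs)]
    · rw [indicator_of_notMem (fun hx => hrs ((hmem s hs).1 hx)),
        indicator_of_notMem (show s ∉ Ioi r from hrs), mul_zero]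
  have hIoisub : Ioi r ⊆ Ioi (0:ℝ) := Ioi_subset_Ioi hr.le
  have eqA : (∫ s in Ioi (0:ℝ), s^2 * (S.indicator (fun x => ‖u x‖^2/(1+‖x‖^2)) (s • ω)))
      = ∫ s in Ioi r, s^2 * (‖u (s • ω)‖^2/(1+s^2)) := by
    rw [setIntegral_congr_fun measurableSet_Ioi eq1, setIntegral_indicator measurableSet_Ioi,
      inter_eq_right.2 hIoisub]
  have eqB : (∫ s in Ioi (0:ℝ), s^2 * (S.indicator (fun x => frob2 (jac u x)) (s • ω)))
      = ∫ s in Ioi r, s^2 * frob2 (jac u (s • ω)) := by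
    rw [setIntegral_congr_fun measurableSet_Ioi eq2, setIntegral_indicator measurableSet_Ioi,
      inter_eq_right.2 hIoisub]
  have hI1r : IntegrableOn (fun s : ℝ => s^2 * (‖u (s • ω)‖^2/(1+s^2))) (Ioi r) := by
    apply IntegrableOn.congr_fun (h1.mono_set hIoisub) _ measurableSet_Ioi
    intro s hs
    show s^2 * (S.indicator (fun x => ‖u x‖^2/(1+‖x‖^2)) (s • ω))
        = s^2 * (‖u (s • ω)‖^2/(1+s^2))
    rw [eq1 s (hIoisub hs), indicator_of_mem (show s ∈ Ioi r from hs)]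
  have hI2r : IntegrableOn (fun s : ℝ => s^2 * frob2 (jac u (s • ω))) (Ioi r) := by
    apply IntegrableOn.congr_fun (h2.mono_set hIoisub) _ measurableSet_Ioi
    intro s hs
    show s^2 * (S.indicator (fun x => frob2 (jac u x)) (s • ω))
        = s^2 * frob2 (jac u (s • ω))
    rw [eq2 s (hIoisub hs), indicator_of_mem (show s ∈ Ioi r from hs)]
  -- differentiability along the ray
  have hmemS : ∀ s ∈ Ioi r, s • ω ∈ S := fun s hs => (hmem s (hr.trans hs)).2 hs
  have hd : ∀ i : Fin 3, ∀ s ∈ Ioi r,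
      HasDerivAt (fun t : ℝ => u (t • ω) i) (fderiv ℝ u (s • ω) ω i) s := by
    intro i s hs
    have hdiff : DifferentiableAt ℝ u (s • ω) :=
      (hu.contDiffAt (hS.mem_nhds (hmemS s hs))).differentiableAt one_ne_zero
    have hray : HasDerivAt (fun t : ℝ => t • ω) ω s := by
      simpa using (hasDerivAt_id s).smul_const ω
    have hcomp : HasDerivAt (fun t : ℝ => u (t • ω)) (fderiv ℝ u (s • ω) ω) s :=
      hdiff.hasFDerivAt.comp_hasDerivAt s hray
    have := (EuclideanSpace.proj (𝕜 := ℝ) i).hasFDerivAt.comp_hasDerivAt s hcomp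
    exact this
  have hraycont : ContinuousOn (fun s : ℝ => u (s • ω)) (Ioi r) :=
    hu.continuousOn.comp (Continuous.continuousOn (continuous_id.smul continuous_const)) hmemS
  have hc : ∀ i : Fin 3, ContinuousOn (fun s : ℝ => fderiv ℝ u (s • ω) ω i) (Ioi r) := by
    intro i
    have hfc : ContinuousOn (fderiv ℝ u) S := hu.continuousOn_fderiv_of_isOpen hS le_rfl
    have c1 : ContinuousOn (fun s : ℝ => fderiv ℝ u (s • ω)) (Ioi r) :=
      hfc.comp (Continuous.continuousOn (continuous_id.smul continuous_const)) hmemS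
    have c2 : ContinuousOn (fun s : ℝ => fderiv ℝ u (s • ω) ω) (Ioi r) :=
      c1.clm_apply continuousOn_const
    exact (EuclideanSpace.proj (𝕜 := ℝ) i).continuous.comp_continuousOn c2
  -- integrability of components
  have hfi : ∀ i : Fin 3, IntegrableOn (fun s : ℝ => (u (s • ω) i)^2) (Ioi r) := by
    intro i
    apply Integrable.mono' (hI1r.const_mul ((1+r^2)/r^2))
    · apply ContinuousOn.aestronglyMeasurable _ measurableSet_Ioi
      exact (((EuclideanSpace.proj (𝕜 := ℝ) i).continuous.comp_continuousOn hraycont).pow 2)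
    · filter_upwards [ae_restrict_mem measurableSet_Ioi] with s hs
      rw [Real.norm_eq_abs, abs_of_nonneg (sq_nonneg _)]
      calc (u (s • ω) i)^2 ≤ ‖u (s • ω)‖^2 := comp_sq_le _ i
        _ ≤ (1+r^2)/r^2 * (s^2 * (‖u (s • ω)‖^2/(1+s^2))) :=
            weight_bound hr hs (sq_nonneg _)
  have hfi' : ∀ i : Fin 3,
      IntegrableOn (fun s : ℝ => (fderiv ℝ u (s • ω) ω i)^2 * s^2) (Ioi r) := by
    intro i
    apply Integrable.mono' hI2r
    · apply ContinuousOn.aestronglyMeasurable _ measurableSet_Ioi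
      exact ((hc i).pow 2).mul (continuous_pow 2).continuousOn
    · filter_upwards [ae_restrict_mem measurableSet_Ioi] with s hs
      rw [Real.norm_eq_abs, abs_of_nonneg (by positivity)]
      have hb1 : (fderiv ℝ u (s • ω) ω i)^2 ≤ ∑ j, (jac u (s • ω) i j)^2 :=
        deriv_comp_sq_le u _ ω hω i
      have hb2 : (∑ j, (jac u (s • ω) i j)^2) ≤ frob2 (jac u (s • ω)) :=
        Finset.single_le_sum (f := fun i => ∑ j, (jac u (s • ω) i j)^2)
          (fun i _ => Finset.sum_nonneg fun j _ => sq_nonneg _) (Finset.mem_univ i)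
      calc (fderiv ℝ u (s • ω) ω i)^2 * s^2 ≤ frob2 (jac u (s • ω)) * s^2 :=
            mul_le_mul_of_nonneg_right (hb1.trans hb2) (sq_nonneg s)
        _ = s^2 * frob2 (jac u (s • ω)) := mul_comm _ _
  -- weighted components
  have wfi : ∀ i : Fin 3,
      IntegrableOn (fun s : ℝ => s^2/(1+s^2) * (u (s • ω) i)^2) (Ioi r) := by
    intro i
    apply Integrable.mono' hI1r
    · apply ContinuousOn.aestronglyMeasurable _ measurableSet_Ioi
      apply ContinuousOn.mul
      · exact ((continuous_pow 2).continuousOn).div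
          (continuous_const.add (continuous_pow 2)).continuousOn (fun s _ => by positivity)
      · exact (((EuclideanSpace.proj (𝕜 := ℝ) i).continuous.comp_continuousOn hraycont).pow 2)
    · filter_upwards [ae_restrict_mem measurableSet_Ioi] with s hs
      rw [Real.norm_eq_abs, abs_of_nonneg (by positivity)]
      calc s^2/(1+s^2) * (u (s • ω) i)^2 ≤ s^2/(1+s^2) * ‖u (s • ω)‖^2 :=
            mul_le_mul_of_nonneg_left (comp_sq_le _ i) (by positivity)
        _ = s^2 * (‖u (s • ω)‖^2/(1+s^2)) := by ring
  -- pointwise expansion of the weighted norm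
  have hexp : ∀ s : ℝ, s^2 * (‖u (s • ω)‖^2/(1+s^2))
      = ∑ i, s^2/(1+s^2) * (u (s • ω) i)^2 := by
    intro s
    rw [norm_sq_eq, Finset.sum_div, Finset.mul_sum]
    exact Finset.sum_congr rfl fun i _ => by ring
  rw [eqA, eqB]
  calc (∫ s in Ioi r, s^2 * (‖u (s • ω)‖^2/(1+s^2)))
      = ∫ s in Ioi r, ∑ i, s^2/(1+s^2) * (u (s • ω) i)^2 :=
        setIntegral_congr_fun measurableSet_Ioi (fun s _ => hexp s)
    _ = ∑ i, ∫ s in Ioi r, s^2/(1+s^2) * (u (s • ω) i)^2 :=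
        integral_finset_sum _ (fun i _ => wfi i)
    _ ≤ ∑ i, ∫ s in Ioi r, (u (s • ω) i)^2 := by
        apply Finset.sum_le_sum
        intro i _
        apply setIntegral_mono_on (wfi i) (hfi i) measurableSet_Ioi
        intro s hs
        have hw : s^2/(1+s^2) ≤ 1 := by
          rw [div_le_one (by positivity)]; linarith
        nlinarith [sq_nonneg (u (s • ω) i), hw]
    _ ≤ ∑ i, 4 * ∫ s in Ioi r, (fderiv ℝ u (s • ω) ω i)^2 * s^2 := by
        apply Finset.sum_le_sum
        intro i _
        exact hardy_one_dim hr (hd i) (hc i) (hfi i) (hfi' i)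
    _ = 4 * ∫ s in Ioi r, ∑ i, (fderiv ℝ u (s • ω) ω i)^2 * s^2 := by
        rw [← Finset.mul_sum, integral_finset_sum _ (fun i _ => hfi' i)]
    _ ≤ 4 * ∫ s in Ioi r, s^2 * frob2 (jac u (s • ω)) := by
        apply mul_le_mul_of_nonneg_left _ (by norm_num)
        apply setIntegral_mono_on _ hI2r measurableSet_Ioi
        · intro s hs
          rw [← Finset.sum_mul]
          calc (∑ i, (fderiv ℝ u (s • ω) ω i)^2) * s^2
              ≤ frob2 (jac u (s • ω)) * s^2 :=
                mul_le_mul_of_nonneg_right (deriv_norm_sq_le u _ ω hω) (sq_nonneg s)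
            _ = s^2 * frob2 (jac u (s • ω)) := mul_comm _ _
        · exact integrable_finset_sum _ (fun i _ => hfi' i)

end HardyAux

/-- Hardy-type inequality in the exterior of a hemisphere in the half-space. -/
theorem hardy_exterior_hemisphere (r : ℝ) (hr : 0 < r) :
    ∃ c : ℝ, 0 < c ∧ ∀ u : E3 → E3,
      ContDiffOn ℝ 1 u {x : E3 | r < ‖x‖ ∧ x 2 < 0} →
      IntegrableOn (fun x => ‖u x‖^2 / (1 + ‖x‖^2)) {x : E3 | r < ‖x‖ ∧ x 2 < 0} →
      IntegrableOn (fun x => frob2 (jac u x)) {x : E3 | r < ‖x‖ ∧ x 2 < 0} →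
      (∫ x in {x : E3 | r < ‖x‖ ∧ x 2 < 0}, ‖u x‖^2 / (1 + ‖x‖^2)) ≤
        c * ∫ x in {x : E3 | r < ‖x‖ ∧ x 2 < 0}, frob2 (jac u x) := by
  refine ⟨4, by norm_num, ?_⟩
  intro u hu hI1 hI2
  have hS : IsOpen {x : E3 | r < ‖x‖ ∧ x 2 < 0} := by
    apply IsOpen.inter
    · exact isOpen_lt continuous_const continuous_norm
    · exact isOpen_lt (EuclideanSpace.proj (𝕜 := ℝ) (2 : Fin 3)).continuous continuous_const
  have hSm : MeasurableSet {x : E3 | r < ‖x‖ ∧ x 2 < 0} := hS.measurableSet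
  have hiF1 : Integrable ({x : E3 | r < ‖x‖ ∧ x 2 < 0}.indicator
      (fun x => ‖u x‖^2/(1+‖x‖^2))) := (integrable_indicator_iff hSm).2 hI1
  have hiF2 : Integrable ({x : E3 | r < ‖x‖ ∧ x 2 < 0}.indicator
      (fun x => frob2 (jac u x))) := (integrable_indicator_iff hSm).2 hI2
  obtain ⟨e1, a1, m1⟩ := polar_repr _ hiF1
  obtain ⟨e2, a2, m2⟩ := polar_repr _ hiF2
  have hres1 : (∫ x in {x : E3 | r < ‖x‖ ∧ x 2 < 0}, ‖u x‖^2/(1+‖x‖^2))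
      = ∫ x, {x : E3 | r < ‖x‖ ∧ x 2 < 0}.indicator (fun x => ‖u x‖^2/(1+‖x‖^2)) x :=
    (integral_indicator hSm).symm
  have hres2 : (∫ x in {x : E3 | r < ‖x‖ ∧ x 2 < 0}, frob2 (jac u x))
      = ∫ x, {x : E3 | r < ‖x‖ ∧ x 2 < 0}.indicator (fun x => frob2 (jac u x)) x :=
    (integral_indicator hSm).symm
  rw [hres1, hres2, e1, e2]
  have hmain : (∫ ω : sphere (0:E3) 1, (∫ s in Ioi (0:ℝ), s^2 *
        ({x : E3 | r < ‖x‖ ∧ x 2 < 0}.indicator (fun x => ‖u x‖^2/(1+‖x‖^2)) (s • (ω:E3))))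
        ∂((volume : Measure E3).toSphere))
      ≤ ∫ ω : sphere (0:E3) 1, 4 * (∫ s in Ioi (0:ℝ), s^2 *
        ({x : E3 | r < ‖x‖ ∧ x 2 < 0}.indicator (fun x => frob2 (jac u x)) (s • (ω:E3))))
        ∂((volume : Measure E3).toSphere) := by
    apply integral_mono_ae m1 (m2.const_mul 4)
    filter_upwards [a1, a2] with ω hω1 hω2
    by_cases hneg : (ω : E3) 2 < 0
    · exact key_ray hr u hu ω (mem_sphere_zero_iff_norm.1 ω.2) hneg hω1 hω2
    · have hzero : ∀ (g : E3 → ℝ), ∀ s ∈ Ioi (0:ℝ),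
          s^2 * ({x : E3 | r < ‖x‖ ∧ x 2 < 0}.indicator g (s • (ω:E3))) = (0:ℝ) := by
        intro g s hs
        rw [indicator_of_notMem, mul_zero]
        intro hmemS
        have hcoord : (s • (ω:E3)) 2 = s * (ω:E3) 2 := rfl
        have h2 := hmemS.2
        rw [hcoord] at h2
        have hs' : (0:ℝ) < s := hs
        nlinarith [le_of_not_gt hneg]
      rw [setIntegral_congr_fun measurableSet_Ioi (hzero _),
        setIntegral_congr_fun measurableSet_Ioi (hzero _)]
      simp
  calc _ ≤ _ := hmain
    _ = 4 * ∫ ω : sphere (0:E3) 1, (∫ s in Ioi (0:ℝ), s^2 *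
        ({x : E3 | r < ‖x‖ ∧ x 2 < 0}.indicator (fun x => frob2 (jac u x)) (s • (ω:E3))))
        ∂((volume : Measure E3).toSphere) := integral_const_mul 4 _

end
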